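/- arXiv:2106.00871 — 2 statements merged into one kernel-verified Lean document; each statement's English description precedes it below -/
import Mathlib

section
/- Let $f : \mathbf{R} \to \mathbf{R}$ be three-times differentiable with $f$, $f'$, $f''$, $f'''$ bounded; let $M$ be a bound with $|f''(t)| \le M$ for all $t$, let $\epsilon > 0$, and let $\delta > 0$ satisfy $\delta\,|f'''(t)| \le \epsilon$ for all $t \in \mathbf{R}$. Let $S$ and $X$ be independent real-valued random variables with $\mathbb{E}[X] = 0$ and $\mathbb{E}[X^2] < \infty$. Then $\bigl|\mathbb{E}[f(S+X)] - \mathbb{E}[f(S)] - \tfrac{1}{2}\mathbb{E}[f''(S)]\,\mathbb{E}[X^2]\bigr| \le \tfrac{\epsilon}{2}\,\mathbb{E}[X^2] + M\,\mathbb{E}[X^2 \, \mathbf{1}_{\{|X| > \delta\}}]$. -/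
open MeasureTheory ProbabilityTheory

private lemma ftc_bound (g g' φ : ℝ → ℝ) (hg : ∀ t, HasDerivAt g (g' t) t)
    (hg0 : g 0 = 0) (hg'm : Measurable g') (hφ : Continuous φ)
    (hb : ∀ t, |g' t| ≤ φ t) (x : ℝ) :
    |g x| ≤ |∫ t in (0:ℝ)..x, φ t| := by
  have hint : IntervalIntegrable g' MeasureTheory.volume 0 x := by
    refine (hφ.intervalIntegrable 0 x).mono_fun hg'm.aestronglyMeasurable.restrict ?_
    refine Filter.Eventually.of_forall fun t => ?_
    have h1 := hb t
    have h2 : (0:ℝ) ≤ φ t := (abs_nonneg _).trans h1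
    simpa [Real.norm_eq_abs, abs_of_nonneg h2] using h1
  have heq : ∫ t in (0:ℝ)..x, g' t = g x - g 0 :=
    intervalIntegral.integral_eq_sub_of_hasDerivAt (fun t _ => hg t) hint
  rw [hg0, sub_zero] at heq
  rw [← heq, ← Real.norm_eq_abs (∫ t in (0:ℝ)..x, g' t)]
  refine intervalIntegral.norm_integral_le_abs_of_norm_le ?_ (hφ.intervalIntegrable 0 x)
  exact Filter.Eventually.of_forall fun t => by simpa [Real.norm_eq_abs] using hb t

private lemma lip_bound (u : ℝ → ℝ) (hu : Differentiable ℝ u) (C : ℝ)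
    (hb : ∀ t, |deriv u t| ≤ C) (b c : ℝ) : |u b - u c| ≤ C * |b - c| := by
  have hC : (0:ℝ) ≤ C := (abs_nonneg _).trans (hb 0)
  have h := ftc_bound (fun t => u (c + t) - u c) (fun t => deriv u (c + t))
      (fun _ => C)
      (fun t => by
        have h1 : HasDerivAt (fun t => u (c + t)) (deriv u (c + t)) t := by
          simpa [Function.comp_def] using ((hu (c + t)).hasDerivAt).comp t ((hasDerivAt_id t).const_add c)
        simpa using h1.sub_const (u c))
      (by simp)
      ((measurable_deriv u).comp (measurable_const.add measurable_id))
      continuous_const (fun t => hb _) (b - c)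
  simp only [add_sub_cancel] at h
  calc |u b - u c| ≤ |∫ _t in (0:ℝ)..(b - c), C| := h
    _ = C * |b - c| := by
        rw [intervalIntegral.integral_const, smul_eq_mul, sub_zero, abs_mul,
          abs_of_nonneg hC, mul_comm]
private lemma taylor2 (f : ℝ → ℝ) (hf1 : Differentiable ℝ f) (hf2 : Differentiable ℝ (deriv f))
    (M : ℝ) (hM : ∀ t, |deriv (deriv f) t| ≤ M) (a x : ℝ) :
    |f (a + x) - f a - deriv f a * x| ≤ M / 2 * x ^ 2 := by
  have hC : (0:ℝ) ≤ M := (abs_nonneg _).trans (hM 0)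
  have h := ftc_bound (fun t => f (a + t) - f a - deriv f a * t)
      (fun t => deriv f (a + t) - deriv f a) (fun t => M * |t|)
      (fun t => by
        have h1 : HasDerivAt (fun t => f (a + t)) (deriv f (a + t)) t := by
          simpa [Function.comp_def] using ((hf1 (a + t)).hasDerivAt).comp t ((hasDerivAt_id t).const_add a)
        have hlin : HasDerivAt (fun t : ℝ => deriv f a * t) (deriv f a) t := by
          simpa using (hasDerivAt_id t).const_mul (deriv f a)
        exact (h1.sub_const (f a)).sub hlin)
      (by simp)
      (((hf2.continuous.comp (continuous_const.add continuous_id)).sub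
        continuous_const).measurable)
      (continuous_const.mul continuous_abs)
      (fun t => by
        have := lip_bound (deriv f) hf2 M hM (a + t) a
        simpa using this) x
  have hI : ∫ t in Set.uIoc (0:ℝ) x, |t| = x ^ 2 / 2 := by
    have h2 := _root_.integral_pow_abs_sub_uIoc (a := (0:ℝ)) (b := x) (n := 1)
    simp only [sub_zero, pow_one] at h2
    rw [h2, sq_abs]
    norm_num
  calc |f (a + x) - f a - deriv f a * x| ≤ abs (∫ t in (0:ℝ)..x, M * |t|) := h
    _ = M / 2 * x ^ 2 := by
        rw [intervalIntegral.integral_const_mul, abs_mul, abs_of_nonneg hC,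
          intervalIntegral.abs_intervalIntegral_eq, hI,
          abs_of_nonneg (by positivity : (0:ℝ) ≤ x ^ 2 / 2)]
        ring

private lemma taylor3 (f : ℝ → ℝ) (hf1 : Differentiable ℝ f) (hf2 : Differentiable ℝ (deriv f))
    (hf3 : Differentiable ℝ (deriv (deriv f)))
    (K : ℝ) (hK : ∀ t, |deriv (deriv (deriv f)) t| ≤ K) (a x : ℝ) :
    |f (a + x) - f a - deriv f a * x - deriv (deriv f) a * x ^ 2 / 2| ≤ K / 6 * |x| ^ 3 := by
  have hC : (0:ℝ) ≤ K := (abs_nonneg _).trans (hK 0)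
  have h := ftc_bound
      (fun t => f (a + t) - f a - deriv f a * t - deriv (deriv f) a * t ^ 2 / 2)
      (fun t => deriv f (a + t) - deriv f a - deriv (deriv f) a * t)
      (fun t => K / 2 * t ^ 2)
      (fun t => by
        have h1 : HasDerivAt (fun t => f (a + t)) (deriv f (a + t)) t := by
          simpa [Function.comp_def] using ((hf1 (a + t)).hasDerivAt).comp t ((hasDerivAt_id t).const_add a)
        have hlin : HasDerivAt (fun t : ℝ => deriv f a * t) (deriv f a) t := by
          simpa using (hasDerivAt_id t).const_mul (deriv f a)
        have hquad : HasDerivAt (fun t : ℝ => deriv (deriv f) a * t ^ 2 / 2)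
            (deriv (deriv f) a * t) t := by
          have h3 := ((hasDerivAt_pow 2 t).const_mul (deriv (deriv f) a)).div_const 2
          refine h3.congr_deriv ?_
          push_cast
          ring
        exact ((h1.sub_const (f a)).sub hlin).sub hquad)
      (by simp)
      (((hf2.continuous.comp (continuous_const.add continuous_id)).sub
          continuous_const).sub (continuous_const.mul continuous_id)).measurable
      (continuous_const.mul (continuous_pow 2))
      (fun t => by
        have := taylor2 (deriv f) hf2 hf3 K hK a t
        simpa using this) x
  calc |f (a + x) - f a - deriv f a * x - deriv (deriv f) a * x ^ 2 / 2|
      ≤ |∫ t in (0:ℝ)..x, K / 2 * t ^ 2| := h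
    _ = K / 6 * |x| ^ 3 := by
        rw [intervalIntegral.integral_const_mul, _root_.integral_pow,
          abs_mul, abs_of_nonneg (by positivity : (0:ℝ) ≤ K / 2), abs_div]
        norm_num [← abs_pow]
        ring
private lemma pointwise_bound (f : ℝ → ℝ) (hf1 : Differentiable ℝ f)
    (hf2 : Differentiable ℝ (deriv f)) (hf3 : Differentiable ℝ (deriv (deriv f)))
    (M ε δ : ℝ) (hM : ∀ t, |deriv (deriv f) t| ≤ M) (hε : 0 < ε) (hδ : 0 < δ)
    (hδf : ∀ t, δ * |deriv (deriv (deriv f)) t| ≤ ε) (a x : ℝ) :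
    |f (a + x) - f a - deriv f a * x - deriv (deriv f) a * x ^ 2 / 2|
      ≤ if δ < |x| then M * x ^ 2 else ε / 2 * x ^ 2 := by
  by_cases hx : δ < |x|
  · rw [if_pos hx]
    have h1 := taylor2 f hf1 hf2 M hM a x
    have h2 : |deriv (deriv f) a * x ^ 2 / 2| ≤ M / 2 * x ^ 2 := by
      rw [abs_div, abs_mul, abs_pow, sq_abs]
      have := mul_le_mul_of_nonneg_right (hM a) (sq_nonneg x)
      rw [abs_of_nonneg (by norm_num : (0:ℝ) ≤ 2)]
      linarith
    calc |f (a + x) - f a - deriv f a * x - deriv (deriv f) a * x ^ 2 / 2|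
        ≤ |f (a + x) - f a - deriv f a * x| + |deriv (deriv f) a * x ^ 2 / 2| :=
          abs_sub _ _
      _ ≤ M / 2 * x ^ 2 + M / 2 * x ^ 2 := add_le_add h1 h2
      _ = M * x ^ 2 := by ring
  · rw [if_neg hx]
    push_neg at hx
    have hK : ∀ t, |deriv (deriv (deriv f)) t| ≤ ε / δ := fun t =>
      (le_div_iff₀ hδ).2 (by rw [mul_comm]; exact hδf t)
    have h1 := taylor3 f hf1 hf2 hf3 (ε / δ) hK a x
    have h2 : ε / δ / 6 * |x| ^ 3 ≤ ε / 2 * x ^ 2 := by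
      have hδ0 : δ ≠ 0 := hδ.ne'
      have h3 : |x| ^ 3 ≤ δ * x ^ 2 := by
        calc |x| ^ 3 = |x| * x ^ 2 := by rw [← sq_abs]; ring
          _ ≤ δ * x ^ 2 := mul_le_mul_of_nonneg_right hx (sq_nonneg x)
      have h4 : ε / δ / 6 * |x| ^ 3 ≤ ε / δ / 6 * (δ * x ^ 2) :=
        mul_le_mul_of_nonneg_left h3 (by positivity)
      have h5 : ε / δ / 6 * (δ * x ^ 2) = ε / 6 * x ^ 2 := by
        field_simp
      nlinarith [sq_nonneg x, hε.le]
    exact h1.trans h2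

/-- The single-swap Taylor estimate: if `f` is three-times differentiable with `f, f', f'',
f'''` bounded, `M` bounds `|f''|`, `δ > 0` satisfies `δ * |f'''| ≤ ε` everywhere, and `S, X`
are independent random variables with `E[X] = 0` and `E[X^2] < ∞`, then
`|E[f (S + X)] - E[f S] - E[f'' S] * E[X^2] / 2| ≤ ε/2 * E[X^2] + M * E[X^2; |X| > δ]`. -/
theorem single_swap_estimate {Ω : Type*} [MeasureSpace Ω]
    [IsProbabilityMeasure (ℙ : Measure Ω)]
    (f : ℝ → ℝ)
    (hf1 : Differentiable ℝ f) (hf2 : Differentiable ℝ (deriv f))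
    (hf3 : Differentiable ℝ (deriv (deriv f)))
    (hfb : ∃ C, ∀ t, |f t| ≤ C) (hf1b : ∃ C, ∀ t, |deriv f t| ≤ C)
    (hf3b : ∃ C, ∀ t, |deriv (deriv (deriv f)) t| ≤ C)
    (M ε δ : ℝ) (hM : ∀ t, |deriv (deriv f) t| ≤ M)
    (hε : 0 < ε) (hδ : 0 < δ)
    (hδf : ∀ t, δ * |deriv (deriv (deriv f)) t| ≤ ε)
    (S X : Ω → ℝ) (hS : Measurable S) (hX : Measurable X)
    (hindep : IndepFun S X ℙ)
    (hXmean : ∫ ω, X ω ∂ℙ = 0) (hX2 : MemLp X 2 ℙ) :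
    |∫ ω, f (S ω + X ω) ∂ℙ - ∫ ω, f (S ω) ∂ℙ
        - (∫ ω, deriv (deriv f) (S ω) ∂ℙ) * (∫ ω, (X ω) ^ 2 ∂ℙ) / 2|
      ≤ ε / 2 * ∫ ω, (X ω) ^ 2 ∂ℙ
        + M * ∫ ω in {ω | δ < |X ω|}, (X ω) ^ 2 ∂ℙ := by
  obtain ⟨C0, hC0⟩ := hfb
  obtain ⟨C1, hC1⟩ := hf1b
  have hM0 : (0:ℝ) ≤ M := (abs_nonneg _).trans (hM 0)
  have hA : MeasurableSet {ω | δ < |X ω|} := measurableSet_lt measurable_const hX.abs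
  have hXint : Integrable X ℙ := hX2.integrable one_le_two
  have hX2int : Integrable (fun ω => X ω ^ 2) ℙ := hX2.integrable_sq
  -- integrability of the pieces
  have hint1 : Integrable (fun ω => f (S ω + X ω)) ℙ := by
    refine (integrable_const C0).mono'
      ((hf1.continuous.measurable.comp (hS.add hX)).aestronglyMeasurable) ?_
    exact Filter.Eventually.of_forall fun ω => by
      simpa [Real.norm_eq_abs] using hC0 (S ω + X ω)
  have hint2 : Integrable (fun ω => f (S ω)) ℙ := by
    refine (integrable_const C0).mono'
      ((hf1.continuous.measurable.comp hS).aestronglyMeasurable) ?_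
    exact Filter.Eventually.of_forall fun ω => by
      simpa [Real.norm_eq_abs] using hC0 (S ω)
  have hg1int : Integrable (fun ω => deriv f (S ω)) ℙ := by
    refine (integrable_const C1).mono'
      ((hf2.continuous.measurable.comp hS).aestronglyMeasurable) ?_
    exact Filter.Eventually.of_forall fun ω => by
      simpa [Real.norm_eq_abs] using hC1 (S ω)
  have hg2int : Integrable (fun ω => deriv (deriv f) (S ω)) ℙ := by
    refine (integrable_const M).mono'
      ((hf3.continuous.measurable.comp hS).aestronglyMeasurable) ?_
    exact Filter.Eventually.of_forall fun ω => by
      simpa [Real.norm_eq_abs] using hM (S ω)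
  have hint3 : Integrable (fun ω => deriv f (S ω) * X ω) ℙ := by
    refine (hXint.abs.const_mul C1).mono'
      (((hf2.continuous.measurable.comp hS).mul hX).aestronglyMeasurable) ?_
    refine Filter.Eventually.of_forall fun ω => ?_
    rw [Real.norm_eq_abs, abs_mul]
    exact mul_le_mul_of_nonneg_right (hC1 _) (abs_nonneg _)
  have hint4 : Integrable (fun ω => deriv (deriv f) (S ω) * X ω ^ 2) ℙ := by
    refine (hX2int.abs.const_mul M).mono'
      (((hf3.continuous.measurable.comp hS).mul (hX.pow_const 2)).aestronglyMeasurable) ?_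
    refine Filter.Eventually.of_forall fun ω => ?_
    rw [Real.norm_eq_abs, abs_mul]
    exact mul_le_mul_of_nonneg_right (hM _) (abs_nonneg _)
  -- independence computations
  have hi1 : ∫ ω, deriv f (S ω) * X ω ∂ℙ = (∫ ω, deriv f (S ω) ∂ℙ) * ∫ ω, X ω ∂ℙ := by
    have h := IndepFun.integral_fun_mul_eq_mul_integral
      (hindep.comp hf2.continuous.measurable measurable_id)
      hg1int.aestronglyMeasurable hXint.aestronglyMeasurable
    simpa [Function.comp] using h
  have hi2 : ∫ ω, deriv (deriv f) (S ω) * X ω ^ 2 ∂ℙ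
      = (∫ ω, deriv (deriv f) (S ω) ∂ℙ) * ∫ ω, X ω ^ 2 ∂ℙ := by
    have h := IndepFun.integral_fun_mul_eq_mul_integral (hindep.comp hf3.continuous.measurable
      (measurable_id.pow_const 2)) hg2int.aestronglyMeasurable hX2int.aestronglyMeasurable
    simpa [Function.comp] using h
  -- the remainder
  have hint12 : Integrable (fun ω => f (S ω + X ω) - f (S ω)) ℙ := hint1.sub hint2
  have hint123 : Integrable (fun ω => f (S ω + X ω) - f (S ω) - deriv f (S ω) * X ω) ℙ :=
    hint12.sub hint3
  have hint4' : Integrable (fun ω => deriv (deriv f) (S ω) * X ω ^ 2 / 2) ℙ :=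
    hint4.div_const 2
  have hRint : Integrable (fun ω => f (S ω + X ω) - f (S ω) - deriv f (S ω) * X ω
      - deriv (deriv f) (S ω) * X ω ^ 2 / 2) ℙ := hint123.sub hint4'
  have hRval : ∫ ω, (f (S ω + X ω) - f (S ω) - deriv f (S ω) * X ω
        - deriv (deriv f) (S ω) * X ω ^ 2 / 2) ∂ℙ
      = ∫ ω, f (S ω + X ω) ∂ℙ - ∫ ω, f (S ω) ∂ℙ
      - (∫ ω, deriv (deriv f) (S ω) ∂ℙ) * (∫ ω, X ω ^ 2 ∂ℙ) / 2 := by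
    rw [integral_sub hint123 hint4', integral_sub hint12 hint3, integral_sub hint1 hint2,
      integral_div, hi1, hi2, hXmean, mul_zero, sub_zero]
  -- the pointwise bound
  have hptw : ∀ ω, |f (S ω + X ω) - f (S ω) - deriv f (S ω) * X ω
      - deriv (deriv f) (S ω) * X ω ^ 2 / 2| ≤ ε / 2 * X ω ^ 2
      + M * Set.indicator {ω' | δ < |X ω'|} (fun ω' => X ω' ^ 2) ω := by
    intro ω
    have h := pointwise_bound f hf1 hf2 hf3 M ε δ hM hε hδ hδf (S ω) (X ω)
    by_cases hω : δ < |X ω|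
    · rw [Set.indicator_of_mem (show ω ∈ {ω' | δ < |X ω'|} from hω)]
      rw [if_pos hω] at h
      have h2 : (0:ℝ) ≤ ε / 2 * X ω ^ 2 := by positivity
      refine h.trans ?_
      linarith
    · rw [Set.indicator_of_notMem (show ω ∉ {ω' | δ < |X ω'|} from hω), mul_zero, add_zero]
      rw [if_neg hω] at h
      exact h
  -- integrate
  have hBint : Integrable (fun ω => ε / 2 * X ω ^ 2
      + M * Set.indicator {ω' | δ < |X ω'|} (fun ω' => X ω' ^ 2) ω) ℙ :=
    (hX2int.const_mul _).add ((hX2int.indicator hA).const_mul M)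
  rw [← hRval]
  calc |∫ ω, (f (S ω + X ω) - f (S ω) - deriv f (S ω) * X ω
        - deriv (deriv f) (S ω) * X ω ^ 2 / 2) ∂ℙ|
      ≤ ∫ ω, |f (S ω + X ω) - f (S ω) - deriv f (S ω) * X ω
        - deriv (deriv f) (S ω) * X ω ^ 2 / 2| ∂ℙ := by
        exact norm_integral_le_integral_norm (μ := ℙ)
          (fun ω => f (S ω + X ω) - f (S ω) - deriv f (S ω) * X ω
            - deriv (deriv f) (S ω) * X ω ^ 2 / 2)
    _ ≤ ∫ ω, (ε / 2 * X ω ^ 2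
        + M * Set.indicator {ω' | δ < |X ω'|} (fun ω' => X ω' ^ 2) ω) ∂ℙ :=
      integral_mono hRint.abs hBint hptw
    _ = ε / 2 * ∫ ω, X ω ^ 2 ∂ℙ + M * ∫ ω in {ω | δ < |X ω|}, X ω ^ 2 ∂ℙ := by
      rw [integral_add (hX2int.const_mul _) ((hX2int.indicator hA).const_mul M),
        integral_const_mul, integral_const_mul, integral_indicator hA]
end

section
/- Let $f : \mathbf{R} \to \mathbf{R}$ be three-times differentiable with $f$, $f'$, $f''$, $f'''$ bounded; let $M$ bound $|f''|$, let $\epsilon > 0$, and let $\delta > 0$ satisfy $\delta\,|f'''(t)| \le \epsilon$ for all $t$. Let $S$, $X$, and $Y$ be real-valued random variables such that $S$ is independent of $X$, $S$ is independent of $Y$, $\mathbb{E}[X] = \mathbb{E}[Y] = 0$, and $\mathbb{E}[X^2] = \mathbb{E}[Y^2] < \infty$. Then $\bigl|\mathbb{E}[f(S+X)] - \mathbb{E}[f(S+Y)]\bigr| \le \epsilon\,\mathbb{E}[X^2] + M\,\mathbb{E}[X^2 \, \mathbf{1}_{\{|X| > \delta\}}] + M\,\mathbb{E}[Y^2 \,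 \mathbf{1}_{\{|Y| > \delta\}}]$. -/
open MeasureTheory ProbabilityTheory

private lemma key_nonneg {g : ℝ → ℝ} (hg : Differentiable ℝ g) (h0 : g 0 = 0) {C : ℝ} (n : ℕ)
    (hb : ∀ t, |deriv g t| ≤ C * |t| ^ n) {x : ℝ} (hx : 0 ≤ x) :
    |g x| ≤ C / (n + 1) * x ^ (n + 1) := by
  have hne : ((n : ℝ) + 1) ≠ 0 := by positivity
  have hpow : ∀ t : ℝ, HasDerivAt (fun t : ℝ => C * t ^ (n + 1) / (n + 1)) (C * t ^ n) t := by
    intro t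
    have h := ((hasDerivAt_pow (n + 1) t).const_mul C).div_const ((n : ℝ) + 1)
    have heq : C * (↑(n + 1) * t ^ (n + 1 - 1)) / ((n : ℝ) + 1) = C * t ^ n := by
      rw [Nat.add_sub_cancel]; push_cast; field_simp
    rw [heq] at h; exact h
  have key : ∀ s : ℝ → ℝ, Differentiable ℝ s → s 0 = 0 →
      (∀ t, deriv s t ≤ C * |t| ^ n) → s x ≤ C * x ^ (n + 1) / (n + 1) := by
    intro s hs hs0 hsb
    have hφd : ∀ t, HasDerivAt (fun t => C * t ^ (n + 1) / (n + 1) - s t)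
        (C * t ^ n - deriv s t) t := fun t => (hpow t).sub (hs t).hasDerivAt
    have hdiff : Differentiable ℝ (fun t => C * t ^ (n + 1) / (n + 1) - s t) :=
      fun t => (hφd t).differentiableAt
    have hmono : MonotoneOn (fun t => C * t ^ (n + 1) / (n + 1) - s t) (Set.Ici 0) := by
      apply monotoneOn_of_deriv_nonneg (convex_Ici 0) hdiff.continuous.continuousOn
        hdiff.differentiableOn
      intro t ht
      rw [interior_Ici] at ht
      rw [(hφd t).deriv]
      have h1 : deriv s t ≤ C * |t| ^ n := hsb t
      rw [abs_of_pos ht] at h1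
      linarith
    have := hmono (Set.self_mem_Ici) hx hx
    simp only [h0, hs0] at this ⊢
    simp only [zero_pow (Nat.succ_ne_zero n), mul_zero, zero_div, sub_zero] at this
    linarith
  have h1 : g x ≤ C * x ^ (n + 1) / (n + 1) :=
    key g hg h0 (fun t => (le_abs_self _).trans (hb t))
  have h2 : -g x ≤ C * x ^ (n + 1) / (n + 1) := by
    have := key (fun t => -g t) hg.neg (by simp [h0]) (fun t => by
      rw [deriv.fun_neg]; exact (neg_le_abs _).trans (hb t))
    simpa using this
  have : |g x| ≤ C * x ^ (n + 1) / (n + 1) := abs_le.mpr ⟨by linarith, h1⟩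
  calc |g x| ≤ C * x ^ (n + 1) / (n + 1) := this
    _ = C / (n + 1) * x ^ (n + 1) := by ring

private lemma key_lemma {g : ℝ → ℝ} (hg : Differentiable ℝ g) (h0 : g 0 = 0) {C : ℝ} (n : ℕ)
    (hb : ∀ t, |deriv g t| ≤ C * |t| ^ n) (x : ℝ) :
    |g x| ≤ C / (n + 1) * |x| ^ (n + 1) := by
  rcases le_or_gt 0 x with hx | hx
  · rw [abs_of_nonneg hx]; exact key_nonneg hg h0 n hb hx
  · have hg' : Differentiable ℝ (fun t => g (-t)) := hg.comp differentiable_neg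
    have hb' : ∀ t, |deriv (fun t => g (-t)) t| ≤ C * |t| ^ n := by
      intro t
      rw [deriv_comp_neg, abs_neg]
      simpa using hb (-t)
    have := key_nonneg hg' (by simpa using h0) n hb' (x := -x) (by linarith)
    simp only [neg_neg] at this
    rw [abs_of_neg hx]
    exact this

private lemma remainder_bound (f : ℝ → ℝ) (hf1 : Differentiable ℝ f)
    (hf2 : Differentiable ℝ (deriv f)) (hf3 : Differentiable ℝ (deriv (deriv f)))
    {M L : ℝ} (hM : ∀ t, |deriv (deriv f) t| ≤ M)
    (hL : ∀ t, |deriv (deriv (deriv f)) t| ≤ L) (s x : ℝ) :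
    |f (s + x) - f s - deriv f s * x - deriv (deriv f) s * x ^ 2 / 2|
      ≤ min (L / 6 * |x| ^ 3) (M * x ^ 2) := by
  set P : ℝ → ℝ := fun t => deriv (deriv f) (s + t) - deriv (deriv f) s with hPdef
  set Q : ℝ → ℝ := fun t => deriv f (s + t) - deriv f s - deriv (deriv f) s * t with hQdef
  set R : ℝ → ℝ := fun t => f (s + t) - f s - deriv f s * t - deriv (deriv f) s * t ^ 2 / 2
    with hRdef
  have hPd : ∀ t, HasDerivAt P (deriv (deriv (deriv f)) (s + t)) t := by
    intro t
    have h1 : HasDerivAt (fun t => deriv (deriv f) (s + t)) (deriv (deriv (deriv f)) (s + t)) t := by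
      simpa [Function.comp_def] using (HasDerivAt.comp t (hf3 (s + t)).hasDerivAt ((hasDerivAt_id t).const_add s))
    exact h1.sub_const (deriv (deriv f) s)
  have hQd : ∀ t, HasDerivAt Q (P t) t := by
    intro t
    have h1 : HasDerivAt (fun t => deriv f (s + t)) (deriv (deriv f) (s + t)) t := by
      simpa [Function.comp_def] using (HasDerivAt.comp t (hf2 (s + t)).hasDerivAt ((hasDerivAt_id t).const_add s))
    have h2 : HasDerivAt (fun t : ℝ => deriv (deriv f) s * t) (deriv (deriv f) s) t := by
      simpa using (hasDerivAt_id t).const_mul (deriv (deriv f) s)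
    exact (h1.sub_const (deriv f s)).sub h2
  have hRd : ∀ t, HasDerivAt R (Q t) t := by
    intro t
    have h1 : HasDerivAt (fun t => f (s + t)) (deriv f (s + t)) t := by
      simpa [Function.comp_def] using (HasDerivAt.comp t (hf1 (s + t)).hasDerivAt ((hasDerivAt_id t).const_add s))
    have h2 : HasDerivAt (fun t : ℝ => deriv f s * t) (deriv f s) t := by
      simpa using (hasDerivAt_id t).const_mul (deriv f s)
    have h3 : HasDerivAt (fun t : ℝ => deriv (deriv f) s * t ^ 2 / 2)
        (deriv (deriv f) s * t) t := by
      have := ((hasDerivAt_pow 2 t).const_mul (deriv (deriv f) s)).div_const 2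
      exact this.congr_deriv (by push_cast; ring)
    exact ((h1.sub_const (f s)).sub h2).sub h3
  have hPdiff : Differentiable ℝ P := fun t => (hPd t).differentiableAt
  have hQdiff : Differentiable ℝ Q := fun t => (hQd t).differentiableAt
  have hRdiff : Differentiable ℝ R := fun t => (hRd t).differentiableAt
  have hP0 : P 0 = 0 := by simp [hPdef]
  have hQ0 : Q 0 = 0 := by simp [hQdef]
  have hR0 : R 0 = 0 := by simp [hRdef]
  have hderivP : ∀ t, deriv P t = deriv (deriv (deriv f)) (s + t) := fun t => (hPd t).deriv
  have hderivQ : ∀ t, deriv Q t = P t := fun t => (hQd t).deriv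
  have hderivR : ∀ t, deriv R t = Q t := fun t => (hRd t).deriv
  -- cubic chain
  have hPb : ∀ t, |P t| ≤ L * |t| := by
    intro t
    have := key_lemma hPdiff hP0 0 (fun t => by simpa [hderivP] using hL (s + t)) t
    simpa using this
  have hQb : ∀ t, |Q t| ≤ L / 2 * |t| ^ 2 := by
    intro t
    have := key_lemma hQdiff hQ0 1 (fun t => by simpa [hderivQ] using hPb t) t
    norm_num at this
    convert this using 2 <;> norm_num
  have hRb : ∀ t, |R t| ≤ L / 6 * |t| ^ 3 := by
    intro t
    have := key_lemma hRdiff hR0 2 (fun t => by simpa [hderivR] using hQb t) t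
    norm_num at this
    calc |R t| ≤ L / 2 / 3 * |t| ^ 3 := this
      _ = L / 6 * |t| ^ 3 := by ring
  -- quadratic chain
  have hM0 : 0 ≤ M := (abs_nonneg _).trans (hM 0)
  have hPb2 : ∀ t, |P t| ≤ 2 * M := by
    intro t
    calc |P t| ≤ |deriv (deriv f) (s + t)| + |deriv (deriv f) s| := abs_sub _ _
      _ ≤ 2 * M := by linarith [hM (s + t), hM s]
  have hQb2 : ∀ t, |Q t| ≤ 2 * M * |t| := by
    intro t
    have := key_lemma hQdiff hQ0 0 (fun t => by simpa [hderivQ] using hPb2 t) t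
    simpa using this
  have hRb2 : ∀ t, |R t| ≤ M * t ^ 2 := by
    intro t
    have := key_lemma hRdiff hR0 1 (fun t => by simpa [hderivR] using hQb2 t) t
    norm_num at this
    exact this
  have hfin : f (s + x) - f s - deriv f s * x - deriv (deriv f) s * x ^ 2 / 2 = R x := rfl
  rw [hfin, le_min_iff]
  exact ⟨hRb x, hRb2 x⟩

private lemma lindeberg_one {Ω : Type*} [MeasureSpace Ω]
    [IsProbabilityMeasure (ℙ : Measure Ω)]
    (f : ℝ → ℝ)
    (hf1 : Differentiable ℝ f) (hf2 : Differentiable ℝ (deriv f))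
    (hf3 : Differentiable ℝ (deriv (deriv f)))
    (hfb : ∃ C, ∀ t, |f t| ≤ C) (hf1b : ∃ C, ∀ t, |deriv f t| ≤ C)
    (M ε δ : ℝ) (hM : ∀ t, |deriv (deriv f) t| ≤ M) (hδ : 0 < δ)
    (hδf : ∀ t, δ * |deriv (deriv (deriv f)) t| ≤ ε)
    (S X : Ω → ℝ) (hS : Measurable S) (hX : Measurable X)
    (hSX : IndepFun S X ℙ) (hXmean : ∫ ω, X ω ∂ℙ = 0) (hX2 : MemLp X 2 ℙ) :
    |∫ ω, f (S ω + X ω) ∂ℙ - ∫ ω, f (S ω) ∂ℙ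
        - (∫ ω, deriv (deriv f) (S ω) ∂ℙ) * (∫ ω, (X ω) ^ 2 ∂ℙ) / 2|
      ≤ ε / 6 * ∫ ω, (X ω) ^ 2 ∂ℙ + M * ∫ ω in {ω | δ < |X ω|}, (X ω) ^ 2 ∂ℙ := by
  obtain ⟨C0, hC0⟩ := hfb
  obtain ⟨C1, hC1⟩ := hf1b
  have hε0 : 0 ≤ ε := le_trans (mul_nonneg hδ.le (abs_nonneg _)) (hδf 0)
  have hM0 : 0 ≤ M := (abs_nonneg _).trans (hM 0)
  have hL : ∀ t, |deriv (deriv (deriv f)) t| ≤ ε / δ := by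
    intro t
    rw [le_div_iff₀ hδ, mul_comm]
    exact hδf t
  -- continuity / measurability
  have hcf : Continuous f := hf1.continuous
  have hcf1 : Continuous (deriv f) := hf2.continuous
  have hcf2 : Continuous (deriv (deriv f)) := hf3.continuous
  have hbint : ∀ (g : Ω → ℝ) (C : ℝ), Measurable g → (∀ ω, |g ω| ≤ C) → Integrable g ℙ := by
    intro g C hg hC
    exact ⟨hg.aestronglyMeasurable,
      HasFiniteIntegral.of_bounded (C := C) (ae_of_all _ fun ω => by
        simpa [Real.norm_eq_abs] using hC ω)⟩
  have int1 : Integrable (fun ω => f (S ω + X ω)) ℙ :=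
    hbint _ C0 (hcf.measurable.comp (hS.add hX)) fun ω => hC0 _
  have int2 : Integrable (fun ω => f (S ω)) ℙ :=
    hbint _ C0 (hcf.measurable.comp hS) fun ω => hC0 _
  have intdfS : Integrable (fun ω => deriv f (S ω)) ℙ :=
    hbint _ C1 (hcf1.measurable.comp hS) fun ω => hC1 _
  have intd2fS : Integrable (fun ω => deriv (deriv f) (S ω)) ℙ :=
    hbint _ M (hcf2.measurable.comp hS) fun ω => hM _
  have intX : Integrable X ℙ := hX2.integrable one_le_two
  have intX2 : Integrable (fun ω => (X ω) ^ 2) ℙ := hX2.integrable_sq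
  have int3 : Integrable (fun ω => deriv f (S ω) * X ω) ℙ :=
    intX.bdd_mul (hcf1.measurable.comp hS).aestronglyMeasurable
      (ae_of_all _ fun ω => by simpa [Real.norm_eq_abs] using hC1 (S ω))
  have int4 : Integrable (fun ω => deriv (deriv f) (S ω) * X ω ^ 2) ℙ :=
    intX2.bdd_mul (hcf2.measurable.comp hS).aestronglyMeasurable
      (ae_of_all _ fun ω => by simpa [Real.norm_eq_abs] using hM (S ω))
  have int4' : Integrable (fun ω => deriv (deriv f) (S ω) * X ω ^ 2 / 2) ℙ := int4.div_const 2
  set g : Ω → ℝ := fun ω =>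
    f (S ω + X ω) - f (S ω) - deriv f (S ω) * X ω - deriv (deriv f) (S ω) * X ω ^ 2 / 2
    with hgdef
  have intg : Integrable g ℙ := ((int1.sub int2).sub int3).sub int4'
  -- independence consequences
  have E1 : ∫ ω, deriv f (S ω) * X ω ∂ℙ = 0 := by
    have h : ∫ ω, deriv f (S ω) * X ω ∂ℙ
        = (∫ ω, deriv f (S ω) ∂ℙ) * ∫ ω, X ω ∂ℙ :=
      (hSX.comp hcf1.measurable measurable_id).integral_fun_mul_eq_mul_integral intdfS.aestronglyMeasurable intX.aestronglyMeasurable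
    rw [h, hXmean, mul_zero]
  have E2 : ∫ ω, deriv (deriv f) (S ω) * X ω ^ 2 ∂ℙ
      = (∫ ω, deriv (deriv f) (S ω) ∂ℙ) * ∫ ω, (X ω) ^ 2 ∂ℙ :=
    (hSX.comp hcf2.measurable (measurable_id.pow_const 2)).integral_fun_mul_eq_mul_integral
      intd2fS.aestronglyMeasurable intX2.aestronglyMeasurable
  have Eg : ∫ ω, g ω ∂ℙ = ∫ ω, f (S ω + X ω) ∂ℙ - ∫ ω, f (S ω) ∂ℙ
      - (∫ ω, deriv (deriv f) (S ω) ∂ℙ) * (∫ ω, (X ω) ^ 2 ∂ℙ) / 2 := by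
    have e1 : ∫ ω, g ω ∂ℙ
        = (∫ ω, (f (S ω + X ω) - f (S ω) - deriv f (S ω) * X ω) ∂ℙ)
          - ∫ ω, deriv (deriv f) (S ω) * X ω ^ 2 / 2 ∂ℙ :=
      integral_sub ((int1.sub int2).sub int3) int4'
    have e2 : ∫ ω, (f (S ω + X ω) - f (S ω) - deriv f (S ω) * X ω) ∂ℙ
        = (∫ ω, (f (S ω + X ω) - f (S ω)) ∂ℙ) - ∫ ω, deriv f (S ω) * X ω ∂ℙ :=
      integral_sub (int1.sub int2) int3
    have e3 : ∫ ω, (f (S ω + X ω) - f (S ω)) ∂ℙ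
        = (∫ ω, f (S ω + X ω) ∂ℙ) - ∫ ω, f (S ω) ∂ℙ := integral_sub int1 int2
    rw [e1, e2, e3, E1, integral_div, E2]
    ring
  rw [← Eg]
  -- bound |∫ g| by splitting
  have habs : |∫ ω, g ω ∂ℙ| ≤ ∫ ω, |g ω| ∂ℙ := by
    simpa [Real.norm_eq_abs] using norm_integral_le_integral_norm (μ := ℙ) g
  have hrb : ∀ ω, |g ω| ≤ min (ε / δ / 6 * |X ω| ^ 3) (M * X ω ^ 2) := fun ω =>
    remainder_bound f hf1 hf2 hf3 hM hL (S ω) (X ω)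
  set A : Set Ω := {ω | δ < |X ω|} with hAdef
  have hA : MeasurableSet A := measurableSet_lt measurable_const hX.abs
  have hsplit : ∫ ω, |g ω| ∂ℙ = (∫ ω in A, |g ω| ∂ℙ) + ∫ ω in Aᶜ, |g ω| ∂ℙ :=
    (integral_add_compl hA intg.abs).symm
  have boundA : ∫ ω in A, |g ω| ∂ℙ ≤ M * ∫ ω in A, (X ω) ^ 2 ∂ℙ := by
    rw [← integral_const_mul]
    exact setIntegral_mono_on intg.abs.integrableOn (intX2.const_mul M).integrableOn hA
      (fun ω _ => (hrb ω).trans (min_le_right _ _))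
  have boundAc : ∫ ω in Aᶜ, |g ω| ∂ℙ ≤ ε / 6 * ∫ ω, (X ω) ^ 2 ∂ℙ := by
    have step1 : ∫ ω in Aᶜ, |g ω| ∂ℙ ≤ ∫ ω in Aᶜ, ε / 6 * (X ω) ^ 2 ∂ℙ := by
      apply setIntegral_mono_on intg.abs.integrableOn (intX2.const_mul _).integrableOn hA.compl
      intro ω hω
      have hax : |X ω| ≤ δ := by
        simp only [hAdef, Set.mem_compl_iff, Set.mem_setOf_eq, not_lt] at hω
        exact hω
      have h1 : |g ω| ≤ ε / δ / 6 * |X ω| ^ 3 := (hrb ω).trans (min_le_left _ _)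
      have h2 : |X ω| ^ 3 = X ω ^ 2 * |X ω| := by
        rw [pow_succ, sq_abs]
      have h3 : ε / δ / 6 * |X ω| ^ 3 ≤ ε / δ / 6 * (X ω ^ 2 * δ) := by
        rw [h2]
        apply mul_le_mul_of_nonneg_left (mul_le_mul_of_nonneg_left hax (sq_nonneg _))
        positivity
      have h4 : ε / δ / 6 * (X ω ^ 2 * δ) = ε / 6 * X ω ^ 2 := by
        field_simp
      linarith
    calc ∫ ω in Aᶜ, |g ω| ∂ℙ ≤ ∫ ω in Aᶜ, ε / 6 * (X ω) ^ 2 ∂ℙ := step1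
      _ = ε / 6 * ∫ ω in Aᶜ, (X ω) ^ 2 ∂ℙ := integral_const_mul _ _
      _ ≤ ε / 6 * ∫ ω, (X ω) ^ 2 ∂ℙ := by
          apply mul_le_mul_of_nonneg_left _ (by positivity)
          exact setIntegral_le_integral intX2 (ae_of_all _ fun ω => sq_nonneg _)
  linarith

/-- **Lindeberg's swapping bound.**  If `f` is three-times differentiable with `f, f', f'',
f'''` bounded, `M` bounds `|f''|`, `δ > 0` satisfies `δ * |f'''| ≤ ε` everywhere, `S` is
independent of `X` and of `Y`, `E[X] = E[Y] = 0` and `E[X^2] = E[Y^2] < ∞`, then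
`|E[f (S + X)] - E[f (S + Y)]| ≤ ε * E[X^2] + M * E[X^2; |X| > δ] + M * E[Y^2; |Y| > δ]`. -/
theorem lindeberg_swap_estimate {Ω : Type*} [MeasureSpace Ω]
    [IsProbabilityMeasure (ℙ : Measure Ω)]
    (f : ℝ → ℝ)
    (hf1 : Differentiable ℝ f) (hf2 : Differentiable ℝ (deriv f))
    (hf3 : Differentiable ℝ (deriv (deriv f)))
    (hfb : ∃ C, ∀ t, |f t| ≤ C) (hf1b : ∃ C, ∀ t, |deriv f t| ≤ C)
    (hf3b : ∃ C, ∀ t, |deriv (deriv (deriv f)) t| ≤ C)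
    (M ε δ : ℝ) (hM : ∀ t, |deriv (deriv f) t| ≤ M)
    (hε : 0 < ε) (hδ : 0 < δ)
    (hδf : ∀ t, δ * |deriv (deriv (deriv f)) t| ≤ ε)
    (S X Y : Ω → ℝ) (hS : Measurable S) (hX : Measurable X) (hY : Measurable Y)
    (hSX : IndepFun S X ℙ) (hSY : IndepFun S Y ℙ)
    (hXmean : ∫ ω, X ω ∂ℙ = 0) (hYmean : ∫ ω, Y ω ∂ℙ = 0)
    (hX2 : MemLp X 2 ℙ) (hY2 : MemLp Y 2 ℙ)
    (hvar : ∫ ω, (X ω) ^ 2 ∂ℙ = ∫ ω, (Y ω) ^ 2 ∂ℙ) :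
    |∫ ω, f (S ω + X ω) ∂ℙ - ∫ ω, f (S ω + Y ω) ∂ℙ|
      ≤ ε * ∫ ω, (X ω) ^ 2 ∂ℙ
        + M * ∫ ω in {ω | δ < |X ω|}, (X ω) ^ 2 ∂ℙ
        + M * ∫ ω in {ω | δ < |Y ω|}, (Y ω) ^ 2 ∂ℙ := by
  have hA := lindeberg_one f hf1 hf2 hf3 hfb hf1b M ε δ hM hδ hδf S X hS hX hSX hXmean hX2
  have hB := lindeberg_one f hf1 hf2 hf3 hfb hf1b M ε δ hM hδ hδf S Y hS hY hSY hYmean hY2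
  rw [← hvar] at hB
  have hEX2 : 0 ≤ ∫ ω, (X ω) ^ 2 ∂ℙ := integral_nonneg fun ω => sq_nonneg _
  set a := ∫ ω, f (S ω + X ω) ∂ℙ
  set b := ∫ ω, f (S ω + Y ω) ∂ℙ
  set c := ∫ ω, f (S ω) ∂ℙ
  set K := ∫ ω, deriv (deriv f) (S ω) ∂ℙ
  set v := ∫ ω, (X ω) ^ 2 ∂ℙ
  have h1 : |a - b| ≤ |a - c - K * v / 2| + |b - c - K * v / 2| := by
    have h : a - b = (a - c - K * v / 2) - (b - c - K * v / 2) := by ring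
    rw [h]
    exact abs_sub _ _
  have hIX : 0 ≤ ∫ ω in {ω | δ < |X ω|}, (X ω) ^ 2 ∂ℙ :=
    integral_nonneg fun ω => sq_nonneg _
  have hIY : 0 ≤ ∫ ω in {ω | δ < |Y ω|}, (Y ω) ^ 2 ∂ℙ :=
    integral_nonneg fun ω => sq_nonneg _
  have hεv : ε / 6 * v + ε / 6 * v ≤ ε * v := by nlinarith
  linarith
end
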